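/- arXiv:0803.2592 — 5 statements merged into one kernel-verified Lean document; each statement's English description precedes it below -/
import Mathlib

section
/- Let G be a group acting by isometries on a nonempty complete metric space (X,d), let S be a finite subset of G, and set δ(x) = max_{s∈S} d(x, s·x). If the action has no point fixed by all elements of S (i.e. δ(x) > 0 for all x ∈ X), then for every positive natural number n there exists a point x_n ∈ X such that every y ∈ X with d(y, x_n) ≤ n·δ(x_n) satisfies δ(y) ≥ δ(x_n)/2. -/
/-- key lemma. If a group G acts by isometries on a nonempty complete metric
space with no point fixed by all elements of the finite set S (δ(x) > 0 for all x), then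
for every n ≥ 1 there is a point x_n such that every y with d(y,x_n) ≤ n·δ(x_n) satisfies
δ(y) ≥ δ(x_n)/2. -/
theorem key_lemma {G X : Type*} [Group G] [MetricSpace X] [Nonempty X] [CompleteSpace X]
    [MulAction G X]
    (hiso : ∀ g : G, Isometry (fun x : X => g • x))
    (S : Finset G) (hS : S.Nonempty)
    (δ : X → ℝ) (hδ : ∀ x, δ x = S.sup' hS (fun s => dist x (s • x)))
    (hpos : ∀ x : X, 0 < δ x)
    (n : ℕ) (hn : 0 < n) :
    ∃ x : X, ∀ y : X, dist y x ≤ (n : ℝ) * δ x → δ x / 2 ≤ δ y := by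
  -- δ is 2-Lipschitz-ish: δ x ≤ δ y + 2 * dist x y
  have hlip : ∀ x y : X, δ x ≤ δ y + 2 * dist x y := by
    intro x y
    rw [hδ x]
    apply Finset.sup'_le
    intro s hs
    have h1 : dist x (s • x) ≤ dist x y + dist y (s • y) + dist (s • y) (s • x) :=
      dist_triangle4 x y (s • y) (s • x)
    have h2 : dist (s • y) (s • x) = dist y x := (hiso s).dist_eq y x
    have h3 : dist y (s • y) ≤ δ y := by
      rw [hδ y]; exact Finset.le_sup' (fun s => dist y (s • y)) hs
    have := dist_comm x y
    linarith [h1, h3, h2.le, dist_comm y x]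
  by_contra hcon
  push_neg at hcon
  choose f hf1 hf2 using hcon
  obtain ⟨x0⟩ := ‹Nonempty X›
  set u : ℕ → X := fun k => f^[k] x0 with hu
  have hstep : ∀ k, u (k+1) = f (u k) := by
    intro k; simp [hu, Function.iterate_succ_apply']
  have hhalf : ∀ k, δ (u k) ≤ δ x0 * (1/2)^k := by
    intro k
    induction k with
    | zero => simp [hu]
    | succ k ih =>
      rw [hstep k]
      have := hf2 (u k)
      calc δ (f (u k)) ≤ δ (u k) / 2 := le_of_lt this
        _ ≤ (δ x0 * (1/2)^k) / 2 := by linarith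
        _ = δ x0 * (1/2)^(k+1) := by ring
  have hdist : ∀ k, dist (u k) (u (k+1)) ≤ ((n : ℝ) * δ x0) * (1/2)^k := by
    intro k
    rw [hstep k, dist_comm]
    calc dist (f (u k)) (u k) ≤ (n : ℝ) * δ (u k) := hf1 (u k)
      _ ≤ (n : ℝ) * (δ x0 * (1/2)^k) := by
          apply mul_le_mul_of_nonneg_left (hhalf k) (Nat.cast_nonneg n)
      _ = ((n : ℝ) * δ x0) * (1/2)^k := by ring
  have hcauchy : CauchySeq u := cauchySeq_of_le_geometric (1/2) ((n : ℝ) * δ x0)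
    (by norm_num) hdist
  obtain ⟨x, hx⟩ := cauchySeq_tendsto_of_complete hcauchy
  -- δ x ≤ δ (u k) + 2 dist x (u k), RHS → 0
  have htend0 : Filter.Tendsto (fun k => δ (u k) + 2 * dist x (u k)) Filter.atTop (nhds 0) := by
    have h1 : Filter.Tendsto (fun k => δ (u k)) Filter.atTop (nhds 0) := by
      apply squeeze_zero (fun k => (hpos (u k)).le) hhalf
      have := tendsto_pow_atTop_nhds_zero_of_lt_one (by norm_num : (0:ℝ) ≤ 1/2)
        (by norm_num : (1:ℝ)/2 < 1)
      simpa using (this.const_mul (δ x0))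
    have h2 : Filter.Tendsto (fun k => dist x (u k)) Filter.atTop (nhds 0) := by
      simpa [dist_comm] using tendsto_iff_dist_tendsto_zero.mp hx
    have := h1.add ((h2.const_mul 2))
    simpa using this
  have : δ x ≤ 0 := ge_of_tendsto htend0 (Filter.Eventually.of_forall fun k => hlip x (u k))
  exact absurd this (not_le.mpr (hpos x))
end

section
/- Let (X,d) be a nonempty complete metric space and δ : X → ℝ a 2-Lipschitz nonnegative function with δ(x) > 0 for all x. If there exists n ≥ 1 such that for every x ∈ X there is y ∈ X with d(y,x) ≤ n·δ(x) and δ(y) < δ(x)/2, then one obtains a contradiction; equivalently, for some x ∈ X, every y with d(y,x) ≤ n·δ(x) satisfies δ(y) ≥ δ(x)/2. -/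
theorem key_aux {X : Type*} [MetricSpace X] [Nonempty X] [CompleteSpace X]
    (δ : X → ℝ)
    (hlip : ∀ x y : X, |δ x - δ y| ≤ 2 * dist x y)
    (hnn : ∀ x : X, 0 ≤ δ x)
    (hpos : ∀ x : X, 0 < δ x)
    (n : ℕ) :
    (¬ ∀ x : X, ∃ y : X, dist y x ≤ (n : ℝ) * δ x ∧ δ y < δ x / 2) := by
  intro h
  choose f hf1 hf2 using h
  set x0 : X := Classical.arbitrary X
  set u : ℕ → X := fun k => f^[k] x0 with hu
  have hstep : ∀ k, u (k + 1) = f (u k) := by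
    intro k; simp [hu, Function.iterate_succ_apply']
  have hdec : ∀ k, δ (u k) ≤ δ x0 * (1/2)^k := by
    intro k
    induction k with
    | zero => simp [hu]
    | succ k ih =>
      have := hf2 (u k)
      rw [hstep]
      calc δ (f (u k)) ≤ δ (u k) / 2 := le_of_lt (hf2 (u k))
        _ ≤ (δ x0 * (1/2)^k) / 2 := by linarith
        _ = δ x0 * (1/2)^(k+1) := by ring
  have hdist : ∀ k, dist (u k) (u (k+1)) ≤ ((n : ℝ) * δ x0) * (1/2)^k := by
    intro k
    rw [dist_comm, hstep]
    calc dist (f (u k)) (u k) ≤ (n : ℝ) * δ (u k) := hf1 (u k)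
      _ ≤ (n : ℝ) * (δ x0 * (1/2)^k) := by
          apply mul_le_mul_of_nonneg_left (hdec k) (Nat.cast_nonneg n)
      _ = ((n : ℝ) * δ x0) * (1/2)^k := by ring
  have hcauchy : CauchySeq u := cauchySeq_of_le_geometric (1/2) ((n : ℝ) * δ x0)
    (by norm_num) hdist
  obtain ⟨p, hp⟩ := cauchySeq_tendsto_of_complete hcauchy
  have hcont : Continuous δ := by
    have : LipschitzWith 2 δ := by
      intro a b
      rw [edist_dist, edist_dist, Real.dist_eq]
      have h2 := hlip a b
      have hd : (0:ℝ) ≤ dist a b := dist_nonneg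
      calc ENNReal.ofReal |δ a - δ b| ≤ ENNReal.ofReal (2 * dist a b) :=
            ENNReal.ofReal_le_ofReal h2
        _ = 2 * ENNReal.ofReal (dist a b) := by
            rw [ENNReal.ofReal_mul (by norm_num)]; norm_num
    exact this.continuous
  have hδtend : Filter.Tendsto (fun k => δ (u k)) Filter.atTop (nhds (δ p)) :=
    (hcont.tendsto p).comp hp
  have hzero : Filter.Tendsto (fun k => δ (u k)) Filter.atTop (nhds 0) := by
    apply squeeze_zero (fun k => hnn (u k)) hdec
    have : Filter.Tendsto (fun k : ℕ => (1/2 : ℝ)^k) Filter.atTop (nhds 0) :=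
      tendsto_pow_atTop_nhds_zero_of_lt_one (by norm_num) (by norm_num)
    simpa using this.const_mul (δ x0)
  have : δ p = 0 := tendsto_nhds_unique hδtend hzero
  exact absurd this (ne_of_gt (hpos p))

/-- abstract key lemma. (X,d) nonempty complete, δ 2-Lipschitz, nonnegative
and everywhere positive. Then it is impossible that for some n ≥ 1 every x admits y with
d(y,x) ≤ n·δ(x) and δ(y) < δ(x)/2; equivalently there is x such that every y with
d(y,x) ≤ n·δ(x) satisfies δ(y) ≥ δ(x)/2. -/
theorem abstract_key_lemma {X : Type*} [MetricSpace X] [Nonempty X] [CompleteSpace X]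
    (δ : X → ℝ)
    (hlip : ∀ x y : X, |δ x - δ y| ≤ 2 * dist x y)
    (hnn : ∀ x : X, 0 ≤ δ x)
    (hpos : ∀ x : X, 0 < δ x)
    (n : ℕ) (hn : 1 ≤ n) :
    (¬ ∀ x : X, ∃ y : X, dist y x ≤ (n : ℝ) * δ x ∧ δ y < δ x / 2) ∧
    (∃ x : X, ∀ y : X, dist y x ≤ (n : ℝ) * δ x → δ x / 2 ≤ δ y) := by
  have key := key_aux δ hlip hnn hpos n
  refine ⟨key, ?_⟩
  by_contra hc
  push_neg at hc
  exact key fun x => by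
    obtain ⟨y, hy1, hy2⟩ := hc x
    exact ⟨y, hy1, hy2⟩
end

section
/- The ℤ-action by isometries on the Hilbert space ℓ²(ℤ) generated by the affine map ξ ↦ Sξ + δ₀ (where S is the bilateral shift (Sξ)(n) = ξ(n−1) and δ₀ is the Dirac mass at 0) almost has fixed points but is metrically proper; in particular it has no global fixed point. -/
open scoped ENNReal


/-- the isometric affine ℤ-action on ℓ²(ℤ) generated by ξ ↦ Sξ + δ₀ (shift
plus Dirac mass at 0) almost has fixed points, is metrically proper, and in particular
has no global fixed point. The action A : ℤ → ℓ²(ℤ) → ℓ²(ℤ) is characterized by the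
action axioms together with the coordinatewise formula for A 1. -/
theorem shift_action_almost_fixed_points_proper
    (A : ℤ → lp (fun _ : ℤ => ℝ) 2 → lp (fun _ : ℤ => ℝ) 2)
    (h0 : ∀ ξ, A 0 ξ = ξ)
    (hadd : ∀ m n : ℤ, ∀ ξ, A (m + n) ξ = A m (A n ξ))
    (h1 : ∀ (ξ : lp (fun _ : ℤ => ℝ) 2) (n : ℤ),
      (A 1 ξ : ∀ _ : ℤ, ℝ) n = ξ (n - 1) + (if n = 0 then (1 : ℝ) else 0)) :
    (∀ g : ℤ, Isometry (A g)) ∧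
    (∀ ε > (0 : ℝ), ∀ F : Finset ℤ, ∃ ξ, ∀ g ∈ F, dist (A g ξ) ξ < ε) ∧
    (∀ (ξ : lp (fun _ : ℤ => ℝ) 2) (R : ℝ), 0 < R →
      {g : ℤ | dist (A g ξ) ξ ≤ R}.Finite) ∧
    ¬ ∃ ξ, ∀ g : ℤ, A g ξ = ξ := by
  classical
  have hp2 : (0:ℝ) < (2 : ℝ≥0∞).toReal := by norm_num
  have hpt : ((2 : ℝ≥0∞)).toReal = (2:ℝ) := by norm_num
  -- A 1 preserves distances
  have dist1 : ∀ ξ η : lp (fun _ : ℤ => ℝ) 2, dist (A 1 ξ) (A 1 η) = dist ξ η := by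
    intro ξ η
    rw [dist_eq_norm, dist_eq_norm, lp.norm_eq_tsum_rpow hp2, lp.norm_eq_tsum_rpow hp2]
    congr 1
    have key : ∀ n : ℤ, ((A 1 ξ - A 1 η : lp (fun _ : ℤ => ℝ) 2) : ∀ _ : ℤ, ℝ) n
        = ((ξ - η : lp (fun _ : ℤ => ℝ) 2) : ∀ _ : ℤ, ℝ) (n - 1) := by
      intro n
      rw [lp.coeFn_sub, lp.coeFn_sub]
      simp only [Pi.sub_apply, h1]
      ring
    calc ∑' n : ℤ, ‖((A 1 ξ - A 1 η : lp (fun _ : ℤ => ℝ) 2) : ∀ _ : ℤ, ℝ) n‖ ^ (2 : ℝ≥0∞).toReal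
        = ∑' n : ℤ, (fun m : ℤ => ‖((ξ - η : lp (fun _ : ℤ => ℝ) 2) : ∀ _ : ℤ, ℝ) m‖ ^ (2 : ℝ≥0∞).toReal) ((Equiv.subRight (1:ℤ)) n) := by
          simp only [key]; rfl
      _ = ∑' n : ℤ, ‖((ξ - η : lp (fun _ : ℤ => ℝ) 2) : ∀ _ : ℤ, ℝ) n‖ ^ (2 : ℝ≥0∞).toReal :=
          (Equiv.subRight (1:ℤ)).tsum_eq
            (fun m : ℤ => ‖((ξ - η : lp (fun _ : ℤ => ℝ) 2) : ∀ _ : ℤ, ℝ) m‖ ^ (2 : ℝ≥0∞).toReal)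
  have iso1 : Isometry (A 1) := Isometry.of_dist_eq dist1
  have einv : ∀ ζ, A 1 (A (-1) ζ) = ζ := by
    intro ζ; rw [← hadd 1 (-1)]; norm_num [h0]
  have distneg : ∀ ξ η, dist (A (-1) ξ) (A (-1) η) = dist ξ η := by
    intro ξ η
    have h := dist1 (A (-1) ξ) (A (-1) η)
    rw [einv, einv] at h
    exact h.symm
  have isoneg : Isometry (A (-1)) := Isometry.of_dist_eq distneg
  have isoAll : ∀ g : ℤ, Isometry (A g) := by
    intro g
    induction g using Int.induction_on with
    | zero => have : A 0 = id := funext h0; rw [this]; exact isometry_id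
    | succ n ih =>
        have : A ((n : ℤ) + 1) = fun ξ => A 1 (A n ξ) := by
          funext ξ; rw [show ((n:ℤ) + 1) = 1 + n by ring, hadd]
        rw [this]; exact iso1.comp ih
    | pred n ih =>
        have : A (-(n : ℤ) - 1) = fun ξ => A (-1) (A (-n) ξ) := by
          funext ξ; rw [show (-(n:ℤ) - 1) = -1 + -n by ring, hadd]
        rw [this]; exact isoneg.comp ih
  have dneg1 : ∀ ξ, dist (A (-1) ξ) ξ = dist (A 1 ξ) ξ := by
    intro ξ
    have h := dist1 (A (-1) ξ) ξ
    rw [einv] at h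
    rw [← h, dist_comm]
  -- telescoping bound
  have tele : ∀ (ξ : lp (fun _ : ℤ => ℝ) 2) (g : ℤ),
      dist (A g ξ) ξ ≤ |(g : ℝ)| * dist (A 1 ξ) ξ := by
    intro ξ g
    have hd0 : (0:ℝ) ≤ dist (A 1 ξ) ξ := dist_nonneg
    induction g using Int.induction_on with
    | zero => simp [h0]
    | succ n ih =>
        have e : A ((n : ℤ) + 1) ξ = A n (A 1 ξ) := hadd n 1 ξ
        have habs1 : |(((n:ℤ) + 1 : ℤ) : ℝ)| = (n:ℝ) + 1 := by
          push_cast; rw [abs_of_nonneg (by positivity)]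
        have habs2 : |(((n:ℤ)) : ℝ)| = (n:ℝ) := by
          push_cast; rw [abs_of_nonneg (by positivity)]
        rw [habs2] at ih
        rw [habs1]
        calc dist (A ((n:ℤ)+1) ξ) ξ ≤ dist (A ((n:ℤ)+1) ξ) (A n ξ) + dist (A n ξ) ξ :=
              dist_triangle _ _ _
          _ = dist (A 1 ξ) ξ + dist (A n ξ) ξ := by
              rw [e, (isoAll n).dist_eq]
          _ ≤ ((n:ℝ) + 1) * dist (A 1 ξ) ξ := by linarith
    | pred n ih =>
        have e : A (-(n : ℤ) - 1) ξ = A (-n) (A (-1) ξ) := by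
          rw [show (-(n:ℤ) - 1) = -n + -1 by ring, hadd]
        have habs1 : |((-(n:ℤ) - 1 : ℤ) : ℝ)| = (n:ℝ) + 1 := by
          push_cast
          rw [show (-(n:ℝ) - 1) = -((n:ℝ)+1) by ring, abs_neg, abs_of_nonneg (by positivity)]
        have habs2 : |((-(n:ℤ) : ℤ) : ℝ)| = (n:ℝ) := by
          push_cast; rw [abs_neg, abs_of_nonneg (by positivity)]
        rw [habs2] at ih
        rw [habs1]
        calc dist (A (-(n:ℤ)-1) ξ) ξ ≤ dist (A (-(n:ℤ)-1) ξ) (A (-n) ξ) + dist (A (-n) ξ) ξ :=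
              dist_triangle _ _ _
          _ = dist (A 1 ξ) ξ + dist (A (-n) ξ) ξ := by
              rw [e, (isoAll (-n)).dist_eq, dneg1]
          _ ≤ ((n:ℝ) + 1) * dist (A 1 ξ) ξ := by linarith
  -- coordinates of A n 0
  have coordAn0 : ∀ n : ℕ, ∀ k : ℤ, ((A (n:ℤ) 0 : lp (fun _ : ℤ => ℝ) 2) : ∀ _ : ℤ, ℝ) k
      = if 0 ≤ k ∧ k < (n:ℤ) then 1 else 0 := by
    intro n
    induction n with
    | zero =>
        intro k
        rw [Nat.cast_zero, h0, lp.coeFn_zero]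
        simp only [Pi.zero_apply]
        rw [if_neg (by omega)]
    | succ n ih =>
        intro k
        have e : A (((n+1:ℕ)):ℤ) 0 = A 1 (A (n:ℤ) 0) := by
          rw [show (((n+1:ℕ)):ℤ) = (1:ℤ) + (n:ℤ) by push_cast; ring, hadd]
        rw [e, h1, ih]
        by_cases hk : k = 0
        · subst hk
          rw [if_neg (by omega), if_pos rfl, if_pos (by constructor <;> omega)]
          norm_num
        · rw [if_neg hk]
          by_cases h2 : 0 ≤ k - 1 ∧ k - 1 < (n:ℤ)
          · rw [if_pos h2, if_pos (by push_cast; omega)]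
            norm_num
          · rw [if_neg h2, if_neg (by push_cast; omega)]
            norm_num
  have norm_lb : ∀ n : ℕ, (n : ℝ) ≤ ‖(A (n:ℤ) 0 : lp (fun _ : ℤ => ℝ) 2)‖ ^ (2:ℝ≥0∞).toReal := by
    intro n
    refine le_trans ?_ (lp.sum_rpow_le_norm_rpow hp2 (A (n:ℤ) 0) (Finset.Icc 0 ((n:ℤ) - 1)))
    have hval : ∀ k ∈ Finset.Icc (0:ℤ) ((n:ℤ)-1),
        ‖((A (n:ℤ) 0 : lp (fun _ : ℤ => ℝ) 2) : ∀ _ : ℤ, ℝ) k‖ ^ (2:ℝ≥0∞).toReal = 1 := by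
      intro k hk
      rw [Finset.mem_Icc] at hk
      rw [coordAn0, if_pos (by omega)]
      simp [hpt]
    rw [Finset.sum_congr rfl hval, Finset.sum_const, Int.card_Icc]
    simp
  have norm_neg : ∀ g : ℤ, ‖(A g 0 : lp (fun _ : ℤ => ℝ) 2)‖ = ‖(A (-g) 0 : lp (fun _ : ℤ => ℝ) 2)‖ := by
    intro g
    have h := (isoAll (-g)).dist_eq (A g 0) 0
    have e : A (-g) (A g 0) = 0 := by rw [← hadd (-g) g]; simp [h0]
    rw [e] at h
    rw [← dist_zero_right, ← h, dist_comm, dist_zero_right]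
  have glb : ∀ g : ℤ, |(g:ℝ)| ≤ ‖(A g 0 : lp (fun _ : ℤ => ℝ) 2)‖ ^ (2:ℝ≥0∞).toReal := by
    intro g
    rcases le_or_gt 0 g with hg | hg
    · lift g to ℕ using hg
      rw [abs_of_nonneg (by positivity)]
      exact_mod_cast norm_lb g
    · have hg' : (0:ℤ) ≤ -g := by omega
      rw [norm_neg]
      obtain ⟨m, hm⟩ := Int.eq_ofNat_of_zero_le hg'
      rw [hm]
      rw [abs_of_nonpos (by exact_mod_cast (le_of_lt hg : g ≤ 0) |> Int.cast_le.mpr)]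
      have : (-(g:ℝ)) = (m:ℝ) := by exact_mod_cast congrArg (Int.cast : ℤ → ℝ) hm
      rw [this]
      exact_mod_cast norm_lb m
  -- properness
  have proper : ∀ (ξ : lp (fun _ : ℤ => ℝ) 2) (R : ℝ), 0 < R →
      {g : ℤ | dist (A g ξ) ξ ≤ R}.Finite := by
    intro ξ R hR
    set C := R + 2 * ‖ξ‖ with hC
    set D := C ^ (2:ℝ≥0∞).toReal with hD
    apply Set.Finite.subset (Set.finite_Icc (-⌈D⌉) ⌈D⌉)
    intro g hg
    simp only [Set.mem_setOf_eq] at hg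
    have hAg0 : ‖(A g 0 : lp (fun _ : ℤ => ℝ) 2)‖ ≤ C := by
      have t1 : dist (A g 0) (A g ξ) = ‖ξ‖ := by
        rw [(isoAll g).dist_eq, dist_comm, dist_zero_right]
      calc ‖(A g 0 : lp (fun _ : ℤ => ℝ) 2)‖ = dist (A g 0) 0 := (dist_zero_right _).symm
        _ ≤ dist (A g 0) (A g ξ) + dist (A g ξ) ξ + dist ξ 0 := dist_triangle4 _ _ _ _
        _ ≤ ‖ξ‖ + R + ‖ξ‖ := by rw [t1, dist_zero_right]; linarith
        _ = C := by ring
    have hgD : |(g:ℝ)| ≤ D := by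
      refine le_trans (glb g) ?_
      exact Real.rpow_le_rpow (norm_nonneg _) hAg0 (le_of_lt hp2)
    have : |g| ≤ ⌈D⌉ := by
      have := le_trans hgD (Int.le_ceil D)
      exact_mod_cast (by rwa [← Int.cast_abs] at this : ((|g|:ℤ):ℝ) ≤ ((⌈D⌉:ℤ):ℝ))
    rw [Set.mem_Icc]
    exact abs_le.mp this
  -- almost fixed points
  have almost : ∀ ε > (0:ℝ), ∀ F : Finset ℤ, ∃ ξ, ∀ g ∈ F, dist (A g ξ) ξ < ε := by
    intro ε hε F
    set B : ℕ := F.sup (fun g => g.natAbs) with hB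
    set N : ℕ := ⌈(((B:ℝ)+1)^2) / ε^2⌉₊ + 1 with hN
    have hNR : (0:ℝ) < N := by positivity
    have hNe : ((N:ℝ)) ≠ 0 := ne_of_gt hNR
    have hNbig : ((B:ℝ)+1)^2 / ε^2 < N := by
      calc ((B:ℝ)+1)^2/ε^2 ≤ (⌈(((B:ℝ)+1)^2)/ε^2⌉₊ : ℝ) := Nat.le_ceil _
        _ < N := by rw [hN]; push_cast; linarith
    set f : ℤ → ℝ := fun k => if 0 ≤ k ∧ k ≤ (N:ℤ) then ((N:ℝ) - k)/N else 0 with hf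
    have hfmem : Memℓp f 2 := memℓp_gen (by
      apply summable_of_ne_finset_zero (s := Finset.Icc (0:ℤ) (N:ℤ))
      intro k hk
      rw [Finset.mem_Icc] at hk
      have hfk : f k = 0 := by rw [hf]; simp only; rw [if_neg (by omega)]
      rw [hfk]
      simp [Real.zero_rpow (ne_of_gt hp2)])
    set ξ : lp (fun _ : ℤ => ℝ) 2 := ⟨f, hfmem⟩ with hξ
    have hcoe : ∀ k, (ξ : ∀ _ : ℤ, ℝ) k = f k := fun k => rfl
    have hdcoord : ∀ n : ℤ, ((A 1 ξ - ξ : lp (fun _ : ℤ => ℝ) 2) : ∀ _ : ℤ, ℝ) n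
        = if 1 ≤ n ∧ n ≤ (N:ℤ) then 1/(N:ℝ) else 0 := by
      intro n
      rw [lp.coeFn_sub]
      simp only [Pi.sub_apply, h1, hcoe]
      by_cases hn0 : n = 0
      · subst hn0
        rw [hf]; simp only
        norm_num
      · rw [if_neg hn0]
        by_cases hn : 1 ≤ n ∧ n ≤ (N:ℤ)
        · rw [if_pos hn, hf]; simp only
          rw [if_pos (by omega), if_pos (by omega)]
          push_cast
          field_simp
          ring
        · rw [if_neg hn, hf]; simp only
          by_cases hn1 : n = (N:ℤ) + 1
          · rw [if_pos (by omega), if_neg (by omega), hn1]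
            push_cast
            field_simp
            ring
          · rw [if_neg (by omega), if_neg (by omega)]
            ring
    have hnormd : ‖(A 1 ξ - ξ : lp (fun _ : ℤ => ℝ) 2)‖ = (1/(N:ℝ)) ^ ((1:ℝ)/2) := by
      rw [lp.norm_eq_tsum_rpow hp2]
      have hts : ∑' n : ℤ, ‖((A 1 ξ - ξ : lp (fun _ : ℤ => ℝ) 2) : ∀ _ : ℤ, ℝ) n‖ ^ (2:ℝ≥0∞).toReal
          = 1/(N:ℝ) := by
        rw [tsum_eq_sum (s := Finset.Icc (1:ℤ) (N:ℤ)) (by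
          intro b hb
          rw [Finset.mem_Icc] at hb
          rw [hdcoord, if_neg (by omega)]
          simp [Real.zero_rpow (ne_of_gt hp2)])]
        have hval : ∀ b ∈ Finset.Icc (1:ℤ) (N:ℤ),
            ‖((A 1 ξ - ξ : lp (fun _ : ℤ => ℝ) 2) : ∀ _ : ℤ, ℝ) b‖ ^ (2:ℝ≥0∞).toReal
            = 1/(N:ℝ)^2 := by
          intro b hb
          rw [Finset.mem_Icc] at hb
          rw [hdcoord, if_pos (by omega), hpt, Real.norm_eq_abs,
            abs_of_nonneg (by positivity), Real.rpow_two]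
          field_simp
        rw [Finset.sum_congr rfl hval, Finset.sum_const, Int.card_Icc]
        have hcard : ((N:ℤ) + 1 - 1).toNat = N := by omega
        rw [hcard]
        field_simp
        ring
        rw [← mul_pow, mul_inv_cancel₀ hNe, one_pow]
      rw [hts, hpt]
    refine ⟨ξ, fun g hgF => ?_⟩
    have hgB : |(g:ℝ)| ≤ (B:ℝ) := by
      have hle : g.natAbs ≤ B := Finset.le_sup (f := fun g : ℤ => g.natAbs) hgF
      have hcast : ((g.natAbs : ℕ) : ℝ) = |(g:ℝ)| := by rw [Nat.cast_natAbs, Int.cast_abs]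
      rw [← hcast]
      exact_mod_cast hle
    have hs : ((1:ℝ)/N) ^ ((1:ℝ)/2) = Real.sqrt (1/(N:ℝ)) := (Real.sqrt_eq_rpow _).symm
    have hsq : Real.sqrt (1/(N:ℝ)) < ε/((B:ℝ)+1) := by
      rw [Real.sqrt_lt' (by positivity)]
      rw [div_pow, div_lt_div_iff₀ hNR (by positivity)]
      rw [div_lt_iff₀ (by positivity)] at hNbig
      nlinarith
    have hsnn : (0:ℝ) ≤ Real.sqrt (1/(N:ℝ)) := Real.sqrt_nonneg _
    calc dist (A g ξ) ξ ≤ |(g:ℝ)| * dist (A 1 ξ) ξ := tele ξ g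
      _ ≤ (B:ℝ) * dist (A 1 ξ) ξ := by
          exact mul_le_mul_of_nonneg_right hgB dist_nonneg
      _ = (B:ℝ) * Real.sqrt (1/(N:ℝ)) := by rw [dist_eq_norm, hnormd, hs]
      _ < ε := by
          have h2 : ((B:ℝ)+1) * Real.sqrt (1/(N:ℝ)) < ((B:ℝ)+1) * (ε/((B:ℝ)+1)) :=
            mul_lt_mul_of_pos_left hsq (by positivity)
          have h3 : ((B:ℝ)+1) * (ε/((B:ℝ)+1)) = ε := by field_simp
          nlinarith
  refine ⟨isoAll, almost, proper, ?_⟩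
  rintro ⟨ξ, hfix⟩
  have huniv : {g : ℤ | dist (A g ξ) ξ ≤ 1} = Set.univ :=
    Set.eq_univ_of_forall (fun g => by simp [hfix g])
  have hfin := proper ξ 1 one_pos
  rw [huniv] at hfin
  exact Set.infinite_univ hfin
end

section
/- Let G be a finitely generated group acting by isometries on nonempty complete metric spaces (X_k, d_k) for k ∈ ℕ, each action having no global fixed point. Then there exist scaling factors r_k > 0 and base points *_k ∈ X_k such that: (1) for each generator s and each k, r_k d_k(*_k, s·*_k) ≤ 1, so that G acts diagonally on the bounded sequences 𝓑_r; and (2) for every non-principal ultrafilter ω on ℕ, the induced G-action on the ultralimit X_{ω,r} is uniform: there exists ε > 0 (namely 1/2) such that for every point y of X_{ω,r}, max over generators s of d_{ω,r}(y, s·y) ≥ ε. -/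
open Filter

/-- Almost-minimum principle for positive functions satisfying a Lipschitz-type
upper bound on a complete metric space. -/
lemma exists_almost_min {X : Type*} [MetricSpace X] [CompleteSpace X] [Nonempty X]
    (D : X → ℝ) (hpos : ∀ x, 0 < D x)
    (hlip : ∀ x z, D x ≤ D z + 2 * dist x z)
    (R : ℝ) (hR : 0 ≤ R) :
    ∃ b : X, ∀ x : X, dist x b ≤ R * D b → D b ≤ 2 * D x := by
  by_contra h
  push_neg at h
  choose f hf1 hf2 using h
  obtain ⟨x0⟩ := ‹Nonempty X›
  set x : ℕ → X := fun n => f^[n] x0 with hx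
  have hxs : ∀ n, x (n + 1) = f (x n) := fun n => Function.iterate_succ_apply' f n x0
  have hDle : ∀ n, D (x n) ≤ D x0 * (1 / 2) ^ n := by
    intro n
    induction n with
    | zero => simp [hx]
    | succ n ih =>
      have h2 : 2 * D (x (n + 1)) < D (x n) := by rw [hxs]; exact hf2 (x n)
      calc D (x (n + 1)) ≤ D (x n) / 2 := by linarith
        _ ≤ (D x0 * (1 / 2) ^ n) / 2 := by linarith
        _ = D x0 * (1 / 2) ^ (n + 1) := by ring
  have hdist : ∀ n, dist (x n) (x (n + 1)) ≤ (R * D x0) * (1 / 2) ^ n := by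
    intro n
    rw [dist_comm, hxs]
    calc dist (f (x n)) (x n) ≤ R * D (x n) := hf1 (x n)
      _ ≤ R * (D x0 * (1 / 2) ^ n) := mul_le_mul_of_nonneg_left (hDle n) hR
      _ = (R * D x0) * (1 / 2) ^ n := by ring
  have hcau : CauchySeq x := cauchySeq_of_le_geometric (1 / 2) (R * D x0) (by norm_num) hdist
  obtain ⟨z, hz⟩ := cauchySeq_tendsto_of_complete hcau
  have hdz : Tendsto (fun n => dist z (x n)) atTop (nhds 0) := by
    have := tendsto_iff_dist_tendsto_zero.mp hz
    simpa [dist_comm] using this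
  have hD0 : Tendsto (fun n => D (x n)) atTop (nhds 0) := by
    have hgeom : Tendsto (fun n : ℕ => D x0 * (1 / 2) ^ n) atTop (nhds 0) := by
      have := tendsto_pow_atTop_nhds_zero_of_lt_one
        (by norm_num : (0:ℝ) ≤ 1 / 2) (by norm_num : (1:ℝ) / 2 < 1)
      simpa using this.const_mul (D x0)
    exact squeeze_zero (fun n => (hpos _).le) hDle hgeom
  have htend : Tendsto (fun n => D (x n) + 2 * dist z (x n)) atTop (nhds 0) := by
    have := hD0.add (hdz.const_mul 2)
    simpa using this
  have hDz : D z ≤ 0 :=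
    ge_of_tendsto htend (Eventually.of_forall fun n => hlip z (x n))
  exact absurd hDz (not_le.mpr (hpos z))

/-- Gromov: if a finitely generated group acts by isometries without
global fixed point on nonempty complete metric spaces X_k, there are scaling factors
r_k > 0 and base points b_k such that (1) r_k d_k(b_k, s·b_k) ≤ 1 for generators s (so G
acts diagonally on 𝓑_r), and (2) for every non-principal ultrafilter ω the diagonal
action on the ultralimit is uniform: for every y ∈ 𝓑_r some generator moves y by at
least 1/2 in the ultralimit distance. -/
theorem gromov_uniform_ultralimit {G : Type*} [Group G]
    (S : Finset G) (hS : S.Nonempty) (hgen : Subgroup.closure (S : Set G) = ⊤)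
    (X : ℕ → Type*) [∀ k, MetricSpace (X k)] [∀ k, Nonempty (X k)]
    [∀ k, CompleteSpace (X k)] [∀ k, MulAction G (X k)]
    (hiso : ∀ (k : ℕ) (g : G), Isometry (fun x : X k => g • x))
    (hnofix : ∀ k : ℕ, ¬ ∃ x : X k, ∀ g : G, g • x = x) :
    ∃ (r : ℕ → ℝ) (b : ∀ k, X k),
      (∀ k, 0 < r k) ∧
      (∀ s ∈ S, ∀ k, r k * dist (b k) (s • b k) ≤ 1) ∧
      ∀ ω : Ultrafilter ℕ, (∀ n : ℕ, ω ≠ pure n) →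
        ∀ y : ∀ k, X k, (∃ C : ℝ, ∀ k, r k * dist (y k) (b k) ≤ C) →
          ∀ l : G → ℝ,
            (∀ s ∈ S, Tendsto (fun k => r k * dist (y k) (s • y k)) ω (nhds (l s))) →
            ∃ s ∈ S, (1 : ℝ) / 2 ≤ l s := by
  classical
  set D : ∀ k, X k → ℝ := fun k x => S.sup' hS (fun s => dist x (s • x)) with hDdef
  have hDnn : ∀ k (x : X k), 0 ≤ D k x := by
    intro k x
    obtain ⟨s, hs⟩ := hS
    exact le_trans dist_nonneg (Finset.le_sup' (fun s => dist x (s • x)) hs)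
  have hpos : ∀ k (x : X k), 0 < D k x := by
    intro k x
    rcases (hDnn k x).lt_or_eq with h | h
    · exact h
    · exfalso
      apply hnofix k
      refine ⟨x, ?_⟩
      have hfix : ∀ s ∈ S, s • x = x := by
        intro s hs
        have h1 : dist x (s • x) ≤ D k x := Finset.le_sup' (fun s => dist x (s • x)) hs
        rw [← h] at h1
        have h0 : dist x (s • x) = 0 := le_antisymm h1 dist_nonneg
        rw [dist_eq_zero] at h0
        exact h0.symm
      have hsub : Subgroup.closure (S : Set G) ≤ MulAction.stabilizer G x :=
        (Subgroup.closure_le _).mpr fun s hs => hfix s hs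
      rw [hgen] at hsub
      exact fun g => hsub (Subgroup.mem_top g)
  have hlip : ∀ k (x z : X k), D k x ≤ D k z + 2 * dist x z := by
    intro k x z
    apply Finset.sup'_le
    intro s hs
    have h1 : dist z (s • z) ≤ D k z := Finset.le_sup' (fun s => dist z (s • z)) hs
    have h2 : dist (s • z) (s • x) = dist z x := (hiso k s).dist_eq z x
    calc dist x (s • x)
        ≤ dist x z + dist z (s • z) + dist (s • z) (s • x) := dist_triangle4 _ _ _ _
      _ = dist x z + dist z (s • z) + dist z x := by rw [h2]
      _ ≤ D k z + 2 * dist x z := by rw [dist_comm z x]; linarith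
  have hbk : ∀ k : ℕ, ∃ b : X k,
      ∀ x : X k, dist x b ≤ ((k : ℝ) + 1) * D k b → D k b ≤ 2 * D k x := fun k =>
    exists_almost_min (D k) (hpos k) (hlip k) ((k : ℝ) + 1) (by positivity)
  choose b hb using hbk
  refine ⟨fun k => (D k (b k))⁻¹, b, fun k => inv_pos.mpr (hpos k (b k)), ?_, ?_⟩
  · intro s hs k
    rw [inv_mul_le_iff₀ (hpos k (b k)), mul_one]
    exact Finset.le_sup' (fun s => dist (b k) (s • b k)) hs
  · rintro ω hω y ⟨C, hC⟩ l hl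
    have hfree : (ω : Filter ℕ) ≤ cofinite := by
      rcases ω.le_cofinite_or_eq_pure with h | ⟨a, ha⟩
      · exact h
      · exact absurd ha (hω a)
    have hkey : ∀ k : ℕ, C ≤ (k : ℝ) + 1 →
        ∃ s ∈ S, (1 : ℝ) / 2 ≤ (D k (b k))⁻¹ * dist (y k) (s • y k) := by
      intro k hk
      have hdb : 0 < D k (b k) := hpos k (b k)
      have h1 : dist (y k) (b k) ≤ ((k : ℝ) + 1) * D k (b k) := by
        have hCk := hC k
        rw [inv_mul_le_iff₀ hdb, mul_comm] at hCk
        exact hCk.trans (mul_le_mul_of_nonneg_right hk hdb.le)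
      have h2 : D k (b k) ≤ 2 * D k (y k) := hb k (y k) h1
      obtain ⟨s, hs, hseq⟩ := Finset.exists_mem_eq_sup' hS (fun s => dist (y k) (s • y k))
      refine ⟨s, hs, ?_⟩
      rw [← hseq, inv_mul_eq_div, le_div_iff₀ hdb]
      linarith
    have hmem : (⋃ s ∈ (S : Set G),
        {k : ℕ | (1:ℝ)/2 ≤ (D k (b k))⁻¹ * dist (y k) (s • y k)}) ∈ ω := by
      have hcof : {k : ℕ | C ≤ (k : ℝ) + 1} ∈ (cofinite : Filter ℕ) := by
        rw [mem_cofinite]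
        apply Set.Finite.subset (Set.finite_Iio (⌈C⌉₊))
        intro k hk
        simp only [Set.mem_compl_iff, Set.mem_setOf_eq, not_le] at hk
        have : (k : ℝ) < C := by linarith
        exact Nat.lt_ceil.mpr this
      refine mem_of_superset (hfree hcof) ?_
      intro k hk
      obtain ⟨s, hs, hsk⟩ := hkey k hk
      exact Set.mem_biUnion hs hsk
    obtain ⟨s, hs, hAs⟩ := (Ultrafilter.finite_biUnion_mem_iff (S : Set G).toFinite).mp hmem
    exact ⟨s, hs, ge_of_tendsto (hl s hs) hAs⟩
end

section
/- Let G be a group generated by a finite set S, acting by isometries on complete metric spaces X_k with no fixed point, with δ_k(x) := max_{s∈S} d_k(x, s·x). Choose *_k ∈ X_k with: every y ∈ X_k with d_k(y,*_k) ≤ k·δ_k(*_k) satisfies δ_k(y) ≥ δ_k(*_k)/2, and set r_k = δ_k(*_k)^{-1}. Then for every sequence (y_k) with (r_k d_k(y_k,*_k)) bounded, and every non-principal ultrafilter ω on ℕ, there exists s ∈ S with lim_ω r_k d_k(y_k, s·y_k) ≥ 1/2. -/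
open Filter

/-- with base points b_k far from almost fixed points (every y with
d(y,b_k) ≤ k·δ_k(b_k) has δ_k(y) ≥ δ_k(b_k)/2) and scaling factors r_k = δ_k(b_k)⁻¹,
every sequence (y_k) at bounded rescaled distance from (b_k) is moved at least 1/2 in
ω-limit by some generator s ∈ S. -/
theorem moved_by_generator_in_ultralimit {G : Type*} [Group G]
    (S : Finset G) (hS : S.Nonempty) (hgen : Subgroup.closure (S : Set G) = ⊤)
    (X : ℕ → Type*) [∀ k, MetricSpace (X k)] [∀ k, Nonempty (X k)]
    [∀ k, CompleteSpace (X k)] [∀ k, MulAction G (X k)]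
    (hiso : ∀ (k : ℕ) (g : G), Isometry (fun x : X k => g • x))
    (hnofix : ∀ k : ℕ, ¬ ∃ x : X k, ∀ g : G, g • x = x)
    (δ : ∀ k : ℕ, X k → ℝ)
    (hδ : ∀ (k : ℕ) (x : X k), δ k x = S.sup' hS (fun s => dist x (s • x)))
    (b : ∀ k, X k)
    (hb : ∀ (k : ℕ) (y : X k), dist y (b k) ≤ (k : ℝ) * δ k (b k) →
      δ k (b k) / 2 ≤ δ k y)
    (r : ℕ → ℝ) (hr : ∀ k, r k = (δ k (b k))⁻¹)
    (ω : Ultrafilter ℕ) (hω : ∀ n : ℕ, ω ≠ pure n)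
    (y : ∀ k, X k) (hy : ∃ C : ℝ, ∀ k, r k * dist (y k) (b k) ≤ C)
    (l : G → ℝ)
    (hl : ∀ s ∈ S, Tendsto (fun k => r k * dist (y k) (s • y k)) ω (nhds (l s))) :
    ∃ s ∈ S, (1 : ℝ) / 2 ≤ l s := by
  classical
  -- δ_k(b_k) > 0
  have hδpos : ∀ k, 0 < δ k (b k) := by
    intro k
    obtain ⟨s0, hs0⟩ := hS
    have hnn : 0 ≤ δ k (b k) := by
      rw [hδ]
      exact le_trans dist_nonneg
        (Finset.le_sup' (fun s => dist (b k) (s • b k)) hs0)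
    rcases hnn.lt_or_eq with h | h
    · exact h
    · exfalso
      apply hnofix k
      refine ⟨b k, fun g => ?_⟩
      have hsub : (S : Set G) ⊆ (MulAction.stabilizer G (b k) : Set G) := by
        intro s hs
        have hle : dist (b k) (s • b k) ≤ 0 := by
          have h1 : dist (b k) (s • b k) ≤ δ k (b k) := by
            rw [hδ]
            exact Finset.le_sup' (fun s => dist (b k) (s • b k)) (Finset.mem_coe.mp hs)
          rwa [← h] at h1
        have : dist (b k) (s • b k) = 0 := le_antisymm hle dist_nonneg
        have := dist_eq_zero.mp this
        exact (MulAction.mem_stabilizer_iff).mpr this.symm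
      have hle : Subgroup.closure (S : Set G) ≤ MulAction.stabilizer G (b k) :=
        (Subgroup.closure_le _).mpr hsub
      rw [hgen] at hle
      exact hle (Subgroup.mem_top g)
  have hrpos : ∀ k, 0 < r k := fun k => by rw [hr]; exact inv_pos.mpr (hδpos k)
  obtain ⟨C, hC⟩ := hy
  -- choose attaining generator
  have hatt : ∀ k, ∃ s ∈ S, δ k (y k) = dist (y k) (s • y k) := by
    intro k
    obtain ⟨s, hs, hval⟩ := Finset.exists_mem_eq_sup' hS (fun s => dist (y k) (s • y k))
    exact ⟨s, hs, by rw [hδ]; exact hval⟩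
  choose σ hσS hσ using hatt
  -- ω maps σ to a pure point s₀ ∈ S
  have hmem : (S : Set G) ∈ Ultrafilter.map σ ω := by
    rw [Ultrafilter.mem_map]
    exact Filter.univ_mem' (fun k => hσS k)
  obtain ⟨s₀, hs₀S, hpure⟩ := Ultrafilter.eq_pure_of_finite_mem S.finite_toSet hmem
  have hσω : ∀ᶠ k in (ω : Filter ℕ), σ k = s₀ := by
    have : {s₀} ∈ Ultrafilter.map σ ω := by rw [hpure]; exact Filter.mem_pure.mpr rfl
    rw [Ultrafilter.mem_map] at this
    exact this
  -- ω-eventually k is large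
  have hcof : (ω : Filter ℕ) ≤ cofinite := by
    rcases ω.le_cofinite_or_eq_pure with h | ⟨a, ha⟩
    · exact h
    · exact absurd ha (hω a)
  have hlarge : ∀ᶠ k : ℕ in (ω : Filter ℕ), C ≤ (k : ℝ) := by
    apply hcof
    rw [Nat.cofinite_eq_atTop]
    filter_upwards [Filter.eventually_ge_atTop ⌈C⌉₊] with k hk
    exact le_trans (Nat.le_ceil C) (by exact_mod_cast hk)
  have key : ∀ᶠ k in (ω : Filter ℕ), (1 : ℝ) / 2 ≤ r k * dist (y k) (s₀ • y k) := by
    filter_upwards [hσω, hlarge] with k hσk hkC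
    have hd : dist (y k) (b k) ≤ (k : ℝ) * δ k (b k) := by
      have h1 : dist (y k) (b k) ≤ C * δ k (b k) := by
        have := hC k
        rw [hr] at this
        calc dist (y k) (b k) = (δ k (b k))⁻¹ * dist (y k) (b k) * δ k (b k) := by
              field_simp [(hδpos k).ne']
          _ ≤ C * δ k (b k) :=
              mul_le_mul_of_nonneg_right this (hδpos k).le
      exact h1.trans (mul_le_mul_of_nonneg_right hkC (hδpos k).le)
    have h2 : δ k (b k) / 2 ≤ δ k (y k) := hb k (y k) hd
    have h3 : δ k (b k) / 2 ≤ dist (y k) (s₀ • y k) := by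
      rw [← hσk, ← hσ k]; exact h2
    have := mul_le_mul_of_nonneg_left h3 (hrpos k).le
    rw [hr] at this ⊢
    calc (1 : ℝ) / 2 = (δ k (b k))⁻¹ * (δ k (b k) / 2) := by
          field_simp [(hδpos k).ne']
      _ ≤ (δ k (b k))⁻¹ * dist (y k) (s₀ • y k) := this
  exact ⟨s₀, hs₀S, ge_of_tendsto (hl s₀ hs₀S) key⟩
end
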